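/- Let S be a string of length n whose OC array factorizes as OC_S = 1^{t₁} 0^{k₁} 1^{t₂} 0^{k₂} ⋯ 1^{t_m} 0^{k_m}, where t₁, …, t_m ≥ 1, k₁, …, k_{m−1} ≥ 1 and k_m ≥ 0. Then for every i with 1 < i < m, k_{i−1} + k_i ≥ t₁ + t₂ + ⋯ + t_{i−1}; in particular k_{i−1} + k_i ≥ i − 1. -/

import Mathlib

variable {α : Type*}

/-- `β` is a border of `S`: a proper (possibly empty) prefix that is also a suffix. -/
def IsBorder (β S : List α) : Prop :=
  β ≠ S ∧ β <+: S ∧ β <:+ S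

/-- `v` occurs in `T` at (0-based) position `p`. -/
def OccursAt (v T : List α) (p : ℕ) : Prop :=
  p + v.length ≤ T.length ∧ v <+: T.drop p

/-- A string is closed if it has length 1 or it has a border with no internal occurrence. -/
def IsClosedWord (S : List α) : Prop :=
  S.length = 1 ∨ ∃ β, IsBorder β S ∧
    ∀ p, OccursAt β S p → p = 0 ∨ p = S.length - β.length

open Classical in
/-- `OCval S i = 1` if the prefix `S[1..i]` is closed, and `0` otherwise. -/
noncomputable def OCval (S : List α) (i : ℕ) : ℕ :=
  if IsClosedWord (S.take i) then 1 else 0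

/-- `Parr S i` is the length of the longest prefix of `S[1..i]` having at least
two (possibly overlapping) occurrences in `S[1..i]`. -/
noncomputable def Parr (S : List α) (i : ℕ) : ℕ :=
  sSup {ℓ | ∃ p q : ℕ, p < q ∧ OccursAt (S.take ℓ) (S.take i) p ∧
    OccursAt (S.take ℓ) (S.take i) q}

/-- `Barr S i` is the length of the longest border of `S[1..i]`. -/
noncomputable def Barr (S : List α) (i : ℕ) : ℕ :=
  sSup {ℓ | IsBorder (S.take ℓ) (S.take i)}

/-- `Bord S i` is the set of lengths of borders of `S[1..i]`. -/
def Bord (S : List α) (i : ℕ) : Set ℕ :=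
  {ℓ | IsBorder (S.take ℓ) (S.take i)}

/-- The substring `S[i..j]` (1-based, inclusive). -/
def Substr (S : List α) (i j : ℕ) : List α :=
  (S.take j).drop (i - 1)

/-- `S[i..j]` is a maximal closed substring of `S`. -/
def IsMCS (S : List α) (i j : ℕ) : Prop :=
  1 ≤ i ∧ i ≤ j ∧ j ≤ S.length ∧ IsClosedWord (Substr S i j) ∧
    (j = S.length ∨ ¬ IsClosedWord (Substr S i (j + 1))) ∧
    (i = 1 ∨ ¬ IsClosedWord (Substr S (i - 1) j))

open Classical in
/-- Number of maximal blocks of consecutive `1`s in the OC array of `S`. -/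
noncomputable def ocRuns (S : List α) : ℕ :=
  ((Finset.Icc 1 S.length).filter
    (fun i => OCval S i = 1 ∧ (i = 1 ∨ OCval S (i - 1) = 0))).card

/-- The OC array of `S` as a list (1-based entries). -/
noncomputable def ocList (S : List α) : List ℕ :=
  (List.range S.length).map (fun j => OCval S (j + 1))

namespace St8

lemma occ_of_ptwise (S : List α) {ℓ x p : ℕ} (hx : x ≤ S.length) (hpx : p + ℓ ≤ x)
    (h : ∀ j, j < ℓ → S[p+j]? = S[j]?) : OccursAt (S.take ℓ) (S.take x) p := by
  have hℓx : ℓ ≤ x := by omega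
  have hl : (S.take ℓ).length = ℓ := by
    rw [List.length_take]; omega
  constructor
  · rw [hl, List.length_take]; omega
  · rw [List.prefix_iff_eq_take, hl]
    apply List.ext_getElem?
    intro n
    rw [List.getElem?_take, List.getElem?_take]
    by_cases hn : n < ℓ
    · rw [if_pos hn, if_pos hn, List.getElem?_drop, List.getElem?_take,
        if_pos (by omega), h n hn]
    · rw [if_neg hn, if_neg hn]

lemma occ_ptwise (S : List α) {ℓ x p : ℕ} (hx : x ≤ S.length) (hℓ : ℓ ≤ S.length)
    (h : OccursAt (S.take ℓ) (S.take x) p) : p + ℓ ≤ x ∧ ∀ j, j < ℓ → S[p+j]? = S[j]? := by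
  have hl : (S.take ℓ).length = ℓ := by rw [List.length_take]; omega
  have h1 := h.1
  rw [hl, List.length_take] at h1
  have hpx : p + ℓ ≤ x := by omega
  refine ⟨hpx, ?_⟩
  have h2 := h.2
  rw [List.prefix_iff_eq_take, hl] at h2
  intro j hj
  have := congrArg (fun l => l[j]?) h2
  simp only [List.getElem?_take] at this
  rw [if_pos hj, if_pos hj, List.getElem?_drop, List.getElem?_take] at this
  rw [if_pos (by omega)] at this
  exact this.symm

lemma occ_len_bound (S : List α) {ℓ x q : ℕ} (hx : x ≤ S.length) (hq : 1 ≤ q)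
    (h : OccursAt (S.take ℓ) (S.take x) q) : ℓ + 1 ≤ x := by
  have h1 := h.1
  rw [List.length_take, List.length_take] at h1
  by_cases hc : ℓ ≤ S.length
  · omega
  · omega

lemma parr_bddAbove (S : List α) {x : ℕ} (hx : x ≤ S.length) :
    BddAbove {ℓ | ∃ p q : ℕ, p < q ∧ OccursAt (S.take ℓ) (S.take x) p ∧
      OccursAt (S.take ℓ) (S.take x) q} := by
  refine ⟨x, fun ℓ hℓ => ?_⟩
  obtain ⟨p, q, hpq, _, h2⟩ := hℓ
  have := occ_len_bound S hx (by omega) h2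
  omega

lemma parr_nonempty (S : List α) {x : ℕ} (h1 : 1 ≤ x) (hx : x ≤ S.length) :
    (0 : ℕ) ∈ {ℓ | ∃ p q : ℕ, p < q ∧ OccursAt (S.take ℓ) (S.take x) p ∧
      OccursAt (S.take ℓ) (S.take x) q} := by
  refine ⟨0, 1, by omega, ?_, ?_⟩ <;>
  · rw [List.take_zero]
    refine ⟨?_, List.nil_prefix⟩
    simp only [List.length_nil, List.length_take]
    omega

lemma le_parr (S : List α) {ℓ x p q : ℕ} (hx : x ≤ S.length) (hpq : p < q)
    (h1 : OccursAt (S.take ℓ) (S.take x) p) (h2 : OccursAt (S.take ℓ) (S.take x) q) :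
    ℓ ≤ Parr S x :=
  le_csSup (parr_bddAbove S hx) ⟨p, q, hpq, h1, h2⟩

lemma le_parr' (S : List α) {ℓ x p : ℕ} (hx : x ≤ S.length) (hp : 1 ≤ p) (hpx : p + ℓ ≤ x)
    (h : ∀ j, j < ℓ → S[p+j]? = S[j]?) : ℓ ≤ Parr S x := by
  refine le_parr S hx (show 0 < p by omega) ?_ (occ_of_ptwise S hx hpx h)
  exact occ_of_ptwise S hx (by omega) (fun j hj => by rw [Nat.zero_add])

lemma parr_mem (S : List α) {x : ℕ} (h1 : 1 ≤ x) (hx : x ≤ S.length) :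
    ∃ p q : ℕ, p < q ∧ OccursAt (S.take (Parr S x)) (S.take x) p ∧
      OccursAt (S.take (Parr S x)) (S.take x) q :=
  Nat.sSup_mem ⟨0, parr_nonempty S h1 hx⟩ (parr_bddAbove S hx)

lemma parr_le (S : List α) {x : ℕ} (h1 : 1 ≤ x) (hx : x ≤ S.length) :
    Parr S x + 1 ≤ x := by
  obtain ⟨p, q, hpq, _, h2⟩ := parr_mem S h1 hx
  exact occ_len_bound S hx (by omega) h2

lemma parr_ptwise (S : List α) {x : ℕ} (h1 : 1 ≤ x) (hx : x ≤ S.length) :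
    ∃ p q : ℕ, p < q ∧ q + Parr S x ≤ x ∧
      (∀ j, j < Parr S x → S[p+j]? = S[j]?) ∧
      (∀ j, j < Parr S x → S[q+j]? = S[j]?) := by
  obtain ⟨p, q, hpq, hp, hq⟩ := parr_mem S h1 hx
  have hℓ : Parr S x ≤ S.length := by have := parr_le S h1 hx; omega
  obtain ⟨hq1, hq2⟩ := occ_ptwise S hx hℓ hq
  obtain ⟨hp1, hp2⟩ := occ_ptwise S hx hℓ hp
  exact ⟨p, q, hpq, by omega, hp2, hq2⟩

lemma parr_mono (S : List α) {x : ℕ} (h1 : 1 ≤ x) (hx : x + 1 ≤ S.length) :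
    Parr S x ≤ Parr S (x+1) := by
  obtain ⟨p, q, hpq, hq, hp2, hq2⟩ := parr_ptwise S h1 (by omega)
  exact le_parr S (by omega) hpq
    (occ_of_ptwise S hx (by omega) hp2) (occ_of_ptwise S hx (by omega) hq2)

lemma parr_succ_le (S : List α) {x : ℕ} (h1 : 1 ≤ x) (hx : x + 1 ≤ S.length) :
    Parr S (x+1) ≤ Parr S x + 1 := by
  rcases Nat.eq_zero_or_pos (Parr S (x+1)) with h0 | hpos
  · omega
  obtain ⟨p, q, hpq, hq, hp2, hq2⟩ := parr_ptwise S (x := x+1) (by omega) hx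
  have : Parr S (x+1) - 1 ≤ Parr S x := by
    refine le_parr S (by omega) hpq
      (occ_of_ptwise S (by omega) (by omega) (fun j hj => hp2 j (by omega)))
      (occ_of_ptwise S (by omega) (by omega) (fun j hj => hq2 j (by omega)))
  omega


/-- J1: at a closed prefix of length `x ≥ 2`, `Parr` jumps and the longest border
(of length `Parr S x`) is a suffix, giving letter equalities. -/
lemma closed_step (S : List α) {x : ℕ} (h2 : 2 ≤ x) (hx : x ≤ S.length)
    (hcl : IsClosedWord (S.take x)) :
    Parr S x = Parr S (x-1) + 1 ∧
      (∀ j, j < Parr S x → S[(x - Parr S x) + j]? = S[j]?) := by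
  have hlen : (S.take x).length = x := by rw [List.length_take]; omega
  rcases hcl with h1 | ⟨β, ⟨hne, hpre, hsuf⟩, honly⟩
  · omega
  set b := β.length with hb
  have hbx : b ≤ x := by
    have := hpre.length_le; rwa [hlen] at this
  have hβ : β = S.take b := by
    have h' := List.prefix_iff_eq_take.mp hpre
    rw [List.take_take] at h'
    rwa [show β.length ⊓ x = b by omega] at h'
  have hblt : b < x := by
    rcases Nat.lt_or_ge b x with h | h
    · exact h
    · exfalso; apply hne; rw [hβ]; congr 1; omega
  have honly' : ∀ p', OccursAt β (S.take x) p' → p' = 0 ∨ p' = x - b := by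
    intro p' h'
    rcases honly p' h' with h | h
    · exact Or.inl h
    · right; rw [hlen] at h; exact h
  have hb1 : 1 ≤ b := by
    by_contra h0
    have hb0 : b = 0 := by omega
    have hocc : OccursAt β (S.take x) 1 := by
      constructor
      · rw [hlen]; omega
      · rw [hβ, hb0, List.take_zero]; exact List.nil_prefix
    rcases honly' 1 hocc with h | h <;> omega
  -- suffix pointwise
  have hsufeq : β = (S.take x).drop (x - b) := by
    have h' := List.suffix_iff_eq_drop.mp hsuf
    rwa [hlen, ← hb] at h'
  have hsufpt : ∀ j, j < b → S[(x - b) + j]? = S[j]? := by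
    intro j hj
    have := congrArg (fun l => l[j]?) hsufeq
    rw [hβ] at this
    rw [List.getElem?_take, if_pos hj] at this
    rw [List.getElem?_drop, List.getElem?_take, if_pos (by omega)] at this
    exact this.symm
  have hParrGe : b ≤ Parr S x :=
    le_parr' S hx (by omega) (by omega) hsufpt
  have hParrLe : Parr S x ≤ b := by
    by_contra hgt
    push_neg at hgt
    obtain ⟨p, q, hpq, hq, hp2, hq2⟩ := parr_ptwise S (by omega) hx
    have hoccq : OccursAt β (S.take x) q := by
      rw [hβ]
      exact occ_of_ptwise S hx (by omega) (fun j hj => hq2 j (by omega))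
    rcases honly' q hoccq with h | h <;> omega
  have hPb : Parr S x = b := le_antisymm hParrLe hParrGe
  have hprev : Parr S (x-1) + 1 ≤ b := by
    by_contra hge
    push_neg at hge
    have hge' : b ≤ Parr S (x-1) := by omega
    obtain ⟨p, q, hpq, hq, hp2, hq2⟩ := parr_ptwise S (x := x-1) (by omega) (by omega)
    have hoccp : OccursAt β (S.take x) p := by
      rw [hβ]
      exact occ_of_ptwise S hx (by omega) (fun j hj => hp2 j (by omega))
    have hoccq : OccursAt β (S.take x) q := by
      rw [hβ]
      exact occ_of_ptwise S hx (by omega) (fun j hj => hq2 j (by omega))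
    rcases honly' p hoccp with hP | hP <;> rcases honly' q hoccq with hQ | hQ <;> omega
  have hsucc : Parr S x ≤ Parr S (x-1) + 1 := by
    have := parr_succ_le S (x := x-1) (by omega) (by omega)
    have hxx : x - 1 + 1 = x := by omega
    rwa [hxx] at this
  exact ⟨by omega, by rw [hPb]; exact hsufpt⟩

/-- J2: at a non-closed prefix of length `x ≥ 2`, `Parr` does not jump. -/
lemma open_step (S : List α) {x : ℕ} (h2 : 2 ≤ x) (hx : x ≤ S.length)
    (hcl : ¬ IsClosedWord (S.take x)) :
    Parr S x = Parr S (x-1) := by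
  have hlen : (S.take x).length = x := by rw [List.length_take]; omega
  have hmono : Parr S (x-1) ≤ Parr S x := by
    have := parr_mono S (x := x-1) (by omega) (by omega)
    have hxx : x - 1 + 1 = x := by omega
    rwa [hxx] at this
  have hsucc : Parr S x ≤ Parr S (x-1) + 1 := by
    have := parr_succ_le S (x := x-1) (by omega) (by omega)
    have hxx : x - 1 + 1 = x := by omega
    rwa [hxx] at this
  by_contra hne'
  have hjump : Parr S x = Parr S (x-1) + 1 := by omega
  set ℓ := Parr S x with hℓdef
  have hℓ1 : 1 ≤ ℓ := by omega
  have hℓx : ℓ + 1 ≤ x := parr_le S (by omega) hx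
  obtain ⟨p, q, hpq, hq, hp2, hq2⟩ := parr_ptwise S (by omega) hx
  -- occurrences within window x-1 would contradict hjump
  have hwin : ∀ p' q' : ℕ, p' < q' → q' + ℓ ≤ x - 1 →
      (∀ j, j < ℓ → S[p'+j]? = S[j]?) → (∀ j, j < ℓ → S[q'+j]? = S[j]?) → False := by
    intro p' q' hpq' hq' hp2' hq2'
    have : ℓ ≤ Parr S (x-1) :=
      le_parr S (x := x-1) (by omega) hpq'
        (occ_of_ptwise S (by omega) (by omega) hp2')
        (occ_of_ptwise S (by omega) (by omega) hq2')
    omega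
  have hqx : q + ℓ = x := by
    rcases Nat.lt_or_ge (q + ℓ) x with h | h
    · exact (hwin p q hpq (by omega) hp2 hq2).elim
    · omega
  have hp0 : p = 0 := by
    by_contra hp0
    exact hwin 0 p (by omega) (by omega) (fun j hj => by rw [Nat.zero_add]) hp2
  -- build closedness witness
  apply hcl
  right
  refine ⟨S.take ℓ, ⟨?_, ?_, ?_⟩, ?_⟩
  · intro heq
    have := congrArg List.length heq
    rw [List.length_take, hlen] at this
    omega
  · rw [show S.take ℓ = (S.take x).take ℓ by rw [List.take_take]; congr 1; omega]
    exact List.take_prefix _ _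
  · rw [List.suffix_iff_eq_drop]
    rw [hlen, List.length_take, show min ℓ S.length = ℓ by omega]
    apply List.ext_getElem?
    intro n
    rw [List.getElem?_take, List.getElem?_drop, List.getElem?_take]
    by_cases hn : n < ℓ
    · rw [if_pos hn, if_pos (by omega)]
      have := hq2 n hn
      rw [show x - ℓ + n = q + n by omega]
      exact this.symm
    · rw [if_neg hn, if_neg (by omega)]
  · intro p' hocc
    have hℓS : ℓ ≤ S.length := by omega
    obtain ⟨h1', h2'⟩ := occ_ptwise S hx hℓS hocc
    rw [hlen, List.length_take, show min ℓ S.length = ℓ by omega]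
    rcases Nat.eq_zero_or_pos p' with h0 | hpos
    · left; exact h0
    rcases Nat.lt_or_ge (p' + ℓ) x with hlt | hge
    · exact (hwin 0 p' (by omega) (by omega)
        (fun j hj => by rw [Nat.zero_add]) h2').elim
    · right; omega

lemma sum_range_map (g : ℕ → ℕ) (m : ℕ) :
    ((List.range m).map g).sum = ∑ j ∈ Finset.range m, g j := by
  induction m with
  | zero => simp
  | succ m ih => rw [List.range_succ, List.map_append, List.sum_append,
      Finset.sum_range_succ, ih]; simp

lemma flat_get? (L : List (List ℕ)) :
    ∀ (r j : ℕ) (hr : r < L.length), j < (L[r]'hr).length →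
      L.flatten[(((L.map List.length).take r).sum + j)]? = (L[r]'hr)[j]? := by
  induction L with
  | nil => intro r j hr; simp at hr
  | cons l L ih =>
    intro r j hr hj
    cases r with
    | zero =>
      simp only [List.flatten_cons, List.map_cons, List.take_zero, List.sum_nil,
        Nat.zero_add, List.getElem?_append, List.getElem_cons_zero] at *
      rw [if_pos hj]
    | succ r =>
      simp only [List.flatten_cons, List.map_cons, List.take_succ_cons, List.sum_cons,
        List.getElem?_append, List.getElem_cons_succ, List.length_cons] at *
      rw [if_neg (by omega), show l.length + ((L.map List.length).take r).sum + j -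
        l.length = ((L.map List.length).take r).sum + j by omega]
      have hr' : r < L.length := by
        have h'' := hr
        simp only [List.length_cons] at h''
        omega
      exact ih r j hr' hj

lemma ocval_eq_one {α : Type*} (S : List α) (x : ℕ) (h : OCval S x = 1) :
    IsClosedWord (S.take x) := by
  by_cases hc : IsClosedWord (S.take x)
  · exact hc
  · rw [OCval, if_neg hc] at h; omega

lemma ocval_eq_zero {α : Type*} (S : List α) (x : ℕ) (h : OCval S x = 0) :
    ¬ IsClosedWord (S.take x) := by
  intro hc
  rw [OCval, if_pos hc] at h; omega

end St8
open St8
set_option maxHeartbeats 1000000 in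
theorem statement_8 {α : Type*} (S : List α) (m : ℕ) (t k : ℕ → ℕ)
    (ht : ∀ r : ℕ, 1 ≤ r → r ≤ m → 1 ≤ t r)
    (hk : ∀ r : ℕ, 1 ≤ r → r ≤ m - 1 → 1 ≤ k r)
    (hfac : ocList S =
      ((List.range m).map
        (fun r => List.replicate (t (r + 1)) 1 ++ List.replicate (k (r + 1)) 0)).flatten) :
    ∀ i : ℕ, 1 < i → i < m →
      (∑ r ∈ Finset.Icc 1 (i - 1), t r) ≤ k (i - 1) + k i ∧
      i - 1 ≤ k (i - 1) + k i := by
  intro i hi1 him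
  obtain ⟨i2, rfl⟩ : ∃ i2, i = i2 + 2 := ⟨i - 2, by omega⟩
  set g : ℕ → List ℕ :=
    (fun r => List.replicate (t (r + 1)) 1 ++ List.replicate (k (r + 1)) 0) with hg
  set n := S.length with hn
  set T : ℕ → ℕ := fun r => ∑ j ∈ Finset.range r, t (j + 1) with hT
  set K : ℕ → ℕ := fun r => ∑ j ∈ Finset.range r, k (j + 1) with hK
  set A : ℕ → ℕ := fun r => ∑ j ∈ Finset.range r, (t (j + 1) + k (j + 1)) with hA
  have hTs : ∀ r, T (r + 1) = T r + t (r + 1) := by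
    intro r; simp only [hT]; exact Finset.sum_range_succ _ _
  have hKs : ∀ r, K (r + 1) = K r + k (r + 1) := by
    intro r; simp only [hK]; exact Finset.sum_range_succ _ _
  have hAs : ∀ r, A (r + 1) = A r + (t (r + 1) + k (r + 1)) := by
    intro r; simp only [hA]; exact Finset.sum_range_succ _ _
  have hATK : ∀ r, A r = T r + K r := by
    intro r; simp only [hA, hT, hK]; exact Finset.sum_add_distrib
  have hAm : ∀ r₁ r₂ : ℕ, r₁ ≤ r₂ → A r₁ ≤ A r₂ := by
    intro r₁ r₂ h
    simp only [hA]
    exact Finset.sum_le_sum_of_subset (Finset.range_subset_range.mpr h)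
  have hTA : ∀ r, T r ≤ A r := by
    intro r
    simp only [hA, hT]
    exact Finset.sum_le_sum (fun x _ => by omega)
  -- length of S
  have hlen : n = A m := by
    have h1 := congrArg List.length hfac
    rw [ocList, List.length_map, List.length_range, List.length_flatten,
      List.map_map, sum_range_map] at h1
    simp only [Function.comp, hg, List.length_append, List.length_replicate] at h1
    rw [← hn] at h1
    simp only [hA]
    exact h1
  -- pointwise OC values
  have hblock : ∀ r j : ℕ, r < m → j < t (r + 1) + k (r + 1) →
      OCval S (A r + j + 1) = (if j < t (r + 1) then 1 else 0) := by
    intro r j hr hj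
    have hxlt : A r + j < n := by
      have h1 := hAs r
      have h2 := hAm (r + 1) m (by omega)
      omega
    have hL : (ocList S)[A r + j]? = some (OCval S (A r + j + 1)) := by
      rw [ocList, List.getElem?_map,
        List.getElem?_range (show A r + j < S.length by omega)]
      rfl
    have hrL : r < ((List.range m).map g).length := by
      rw [List.length_map, List.length_range]; exact hr
    have hLr : ((List.range m).map g)[r]'hrL = g r := by
      rw [List.getElem_map]
      congr 1
      exact List.getElem_range _
    have hgr : g r = List.replicate (t (r + 1)) 1 ++ List.replicate (k (r + 1)) 0 := by
      rw [hg]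
    have hsum : ((((List.range m).map g).map List.length).take r).sum = A r := by
      rw [List.map_map]
      have hcongr : (List.range m).map (List.length ∘ g)
          = (List.range m).map (fun j => t (j + 1) + k (j + 1)) := by
        apply List.map_congr_left
        intro a _
        simp [hg, List.length_append, List.length_replicate]
      rw [hcongr, ← List.map_take, List.take_range, show min r m = r by omega,
        sum_range_map]
    have hjr : j < (((List.range m).map g)[r]'hrL).length := by
      rw [hLr, hgr]
      simp only [List.length_append, List.length_replicate]
      omega
    have hflat := flat_get? ((List.range m).map g) r j hrL hjr
    rw [hsum] at hflat
    have hR : ((List.range m).map g).flatten[A r + j]? =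
        some (if j < t (r + 1) then 1 else 0) := by
      rw [hflat, hLr, hgr, List.getElem?_append]
      by_cases hc : j < t (r + 1)
      · rw [if_pos (by simp only [List.length_replicate]; omega),
          List.getElem?_replicate, if_pos hc, if_pos hc]
      · rw [if_neg (by simp only [List.length_replicate]; omega),
          List.getElem?_replicate, List.length_replicate,
          if_pos (by omega), if_neg hc]
    rw [hfac, hR] at hL
    exact (Option.some.inj hL).symm
  -- positivity
  have htpos : ∀ r, r < m → 1 ≤ t (r + 1) := fun r hr => ht (r + 1) (by omega) (by omega)
  have hkpos : ∀ r, r + 1 < m → 1 ≤ k (r + 1) := fun r hr => hk (r + 1) (by omega) (by omega)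
  -- the key counting lemma
  have main : ∀ r, r < m → (1 ≤ A r → Parr S (A r) + 1 = T r) →
      ∀ j, j ≤ t (r + 1) + k (r + 1) → 1 ≤ A r + j →
        Parr S (A r + j) + 1 = T r + min j (t (r + 1)) := by
    intro r hr hbase j
    induction j with
    | zero => intro _ h1; simpa using hbase h1
    | succ j ihj =>
      intro hj h1
      rw [show A r + (j + 1) = A r + j + 1 from by omega]
      rw [show A r + (j + 1) = A r + j + 1 from by omega] at h1
      have hxn : A r + j + 1 ≤ n := by
        have h2 := hAs r
        have h3 := hAm (r + 1) m (by omega)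
        omega
      have hov := hblock r j hr (by omega)
      rcases Nat.eq_zero_or_pos (A r + j) with hz | hpos
      · have hTr0 : T r = 0 := by have := hTA r; omega
        have hP1 : Parr S (A r + j + 1) + 1 ≤ 1 := by
          have := parr_le S (x := A r + j + 1) (by omega) (by omega)
          omega
        have hmin : min (j + 1) (t (r + 1)) = 1 := by
          have := htpos r hr; omega
        rw [hmin, hTr0]
        omega
      · have hprev := ihj (by omega) (by omega)
        by_cases hc : j < t (r + 1)
        · rw [if_pos hc] at hov
          have hcl := ocval_eq_one S _ hov
          have hstep := (closed_step S (x := A r + j + 1) (by omega) hxn hcl).1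
          rw [show A r + j + 1 - 1 = A r + j by omega] at hstep
          have hm1 : min (j + 1) (t (r + 1)) = j + 1 := by omega
          have hm2 : min j (t (r + 1)) = j := by omega
          rw [hm2] at hprev
          rw [hstep, hm1]
          omega
        · rw [if_neg hc] at hov
          have hcl := ocval_eq_zero S _ hov
          have hstep := open_step S (x := A r + j + 1) (by omega) hxn hcl
          rw [show A r + j + 1 - 1 = A r + j by omega] at hstep
          have hm1 : min (j + 1) (t (r + 1)) = t (r + 1) := by omega
          have hm2 : min j (t (r + 1)) = t (r + 1) := by omega
          rw [hm2] at hprev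
          rw [hstep, hm1]
          omega
  have base : ∀ r, r ≤ m → 1 ≤ A r → Parr S (A r) + 1 = T r := by
    intro r
    induction r with
    | zero =>
      intro _ h1
      simp only [hA, Finset.range_zero, Finset.sum_empty] at h1
      omega
    | succ r ihr =>
      intro hrm h1
      have hr : r < m := by omega
      have hres := main r hr (ihr (by omega)) (t (r + 1) + k (r + 1)) (le_refl _)
        (by have := hAs r; have := htpos r hr; omega)
      rw [← hAs r] at hres
      rw [hres]
      have hmin : min (t (r + 1) + k (r + 1)) (t (r + 1)) = t (r + 1) := by omega
      rw [hmin, hTs r]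
  have key : ∀ r, r < m → ∀ j, j ≤ t (r + 1) + k (r + 1) → 1 ≤ A r + j →
      Parr S (A r + j) + 1 = T r + min j (t (r + 1)) := by
    intro r hr j hj h1
    exact main r hr (base r (by omega)) j hj h1
  -- the border letter-equalities for each run
  have hE : ∀ r, r < m → ∀ j, j + 1 < T (r + 1) → S[(K r + 1) + j]? = S[j]? := by
    intro r hr j hj
    have htp := htpos r hr
    have hTe : T (r + 1) ≤ A r + t (r + 1) := by
      have := hTA r; have := hTs r; omega
    have hen : A r + t (r + 1) ≤ n := by
      have h2 := hAs r
      have h3 := hAm (r + 1) m (by omega)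
      omega
    have he2 : 2 ≤ A r + t (r + 1) := by omega
    have hov := hblock r (t (r + 1) - 1) hr (by omega)
    rw [if_pos (by omega), show A r + (t (r + 1) - 1) + 1 = A r + t (r + 1) by omega] at hov
    have hcl := ocval_eq_one S _ hov
    have hstep := closed_step S (x := A r + t (r + 1)) he2 hen hcl
    have hval : Parr S (A r + t (r + 1)) + 1 = T (r + 1) := by
      have hres := key r hr (t (r + 1)) (by omega) (by omega)
      rw [hres, show min (t (r + 1)) (t (r + 1)) = t (r + 1) by omega, hTs r]
    have harith : A r + t (r + 1) - Parr S (A r + t (r + 1)) = K r + 1 := by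
      have h4 := hATK r
      have h5 := hTs r
      omega
    have hres := hstep.2 j (by omega)
    rwa [harith] at hres
  -- final goal
  have hIcc : ∀ r : ℕ, ∑ x ∈ Finset.Icc 1 r, t x = T r := by
    intro r
    induction r with
    | zero => simp [hT]
    | succ r ihr =>
      rw [Finset.sum_Icc_succ_top (by omega : 1 ≤ r + 1), ihr, hTs r]
  have hidx : i2 + 2 - 1 = i2 + 1 := by omega
  rw [hidx, hIcc (i2 + 1)]
  have hk1 : 1 ≤ k (i2 + 1) := hk (i2 + 1) (by omega) (by omega)
  have hk2 : 1 ≤ k (i2 + 2) := hk (i2 + 2) (by omega) (by omega)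
  have hTge : i2 + 1 ≤ T (i2 + 1) := by
    have hall : ∀ j ∈ Finset.range (i2 + 1), 1 ≤ t (j + 1) := fun j hj => by
      have := Finset.mem_range.mp hj
      exact ht (j + 1) (by omega) (by omega)
    calc i2 + 1 = ∑ _j ∈ Finset.range (i2 + 1), 1 := by simp
    _ ≤ T (i2 + 1) := by simp only [hT]; exact Finset.sum_le_sum hall
  suffices hmain : T (i2 + 1) ≤ k (i2 + 1) + k (i2 + 2) by
    exact ⟨hmain, by omega⟩
  by_contra hAcontra
  push_neg at hAcontra
  obtain ⟨c, hc⟩ : ∃ c, T (i2 + 1) = (k (i2 + 1) + k (i2 + 2)) + 1 + c :=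
    ⟨T (i2 + 1) - (k (i2 + 1) + k (i2 + 2)) - 1, by omega⟩
  have hn1 : i2 + 1 + 1 = i2 + 2 := by omega
  have hn2 : i2 + 2 + 1 = i2 + 3 := by omega
  have hE1 := hE i2 (by omega)
  have hE2 := hE (i2 + 1) (by omega)
  have hE3 := hE (i2 + 2) (by omega)
  simp only [hn1] at hE2
  simp only [hn2] at hE3
  have ht2 : 1 ≤ t (i2 + 2) := by have h := htpos (i2 + 1) (by omega); rwa [hn1] at h
  have ht3 : 1 ≤ t (i2 + 3) := by have h := htpos (i2 + 2) (by omega); rwa [hn2] at h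
  have hT2 : T (i2 + 2) = T (i2 + 1) + t (i2 + 2) := by
    have h := hTs (i2 + 1); rwa [hn1] at h
  have hT3 : T (i2 + 3) = T (i2 + 2) + t (i2 + 3) := by
    have h := hTs (i2 + 2); rwa [hn2] at h
  have hK1 : K (i2 + 1) = K i2 + k (i2 + 1) := hKs i2
  have hK2 : K (i2 + 2) = K (i2 + 1) + k (i2 + 2) := by
    have h := hKs (i2 + 1); rwa [hn1] at h
  set b := T (i2 + 1) with hb
  have c1 : S[K i2 + b]? = S[c]? := by
    have hstep := hE3 c (by omega)
    rwa [show K (i2 + 2) + 1 + c = K i2 + b by omega] at hstep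
  have c2 : S[K i2 + (k (i2 + 1) + 1 + c)]? = S[c]? := by
    have hstep := hE2 c (by omega)
    rwa [show K (i2 + 1) + 1 + c = K i2 + (k (i2 + 1) + 1 + c) by omega] at hstep
  have c3 : S[K i2 + (k (i2 + 1) + 1 + c)]? = S[k (i2 + 1) + c]? := by
    have hstep := hE1 (k (i2 + 1) + c) (by omega)
    rwa [show K i2 + 1 + (k (i2 + 1) + c) = K i2 + (k (i2 + 1) + 1 + c) by omega] at hstep
  have c4 : S[K (i2 + 1) + b]? = S[k (i2 + 1) + c]? := by
    have hstep := hE3 (k (i2 + 1) + c) (by omega)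
    rwa [show K (i2 + 2) + 1 + (k (i2 + 1) + c) = K (i2 + 1) + b by omega] at hstep
  have c5 : S[K (i2 + 1) + b]? = S[k (i2 + 1) + k (i2 + 2) + c]? := by
    have hstep := hE2 (k (i2 + 1) + k (i2 + 2) + c) (by omega)
    rwa [show K (i2 + 1) + 1 + (k (i2 + 1) + k (i2 + 2) + c) = K (i2 + 1) + b by omega]
      at hstep
  have hX : S[K i2 + b]? = S[k (i2 + 1) + k (i2 + 2) + c]? :=
    c1.trans (c2.symm.trans (c3.trans (c4.symm.trans c5)))
  have hx0n : K i2 + b + 1 ≤ n := by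
    have h6 := hATK (i2 + 1)
    have h7 := hAm (i2 + 1) m (by omega)
    omega
  have hocc : ∀ j, j < b → S[(K i2 + 1) + j]? = S[j]? := by
    intro j hj
    rcases Nat.lt_or_ge j (k (i2 + 1) + k (i2 + 2) + c) with hlt | hge
    · exact hE1 j (by omega)
    · have hj' : j = k (i2 + 1) + k (i2 + 2) + c := by omega
      rw [hj']
      rwa [show K i2 + 1 + (k (i2 + 1) + k (i2 + 2) + c) = K i2 + b by omega]
  have hge : b ≤ Parr S (K i2 + b + 1) :=
    le_parr' S hx0n (by omega) (by omega) hocc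
  have hval : Parr S (K i2 + b + 1) + 1 = b := by
    have hres := key i2 (by omega) (t (i2 + 1) + 1) (by omega) (by omega)
    rw [show A i2 + (t (i2 + 1) + 1) = K i2 + b + 1 by
        have h9 := hATK i2; have h10 := hTs i2; omega] at hres
    rw [hres, show min (t (i2 + 1) + 1) (t (i2 + 1)) = t (i2 + 1) by omega,
      show T i2 + t (i2 + 1) = b by rw [hb, hTs i2]]
  omega
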